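/- Under the MMSB setup, with V_2 = V V' and V_{*,2} its row-normalized version, there exists Y_2 ∈ ℝ^{n×K} with all entries nonnegative and no row identically zero such that V_{*,2} = Y_2 · V_{*,2}(𝓘,:); explicitly, Y_2 = N_{M_2} Π 𝒟_τ^{1/2}(𝓘,𝓘) N_{V_2}^{-1}(𝓘,𝓘), where M_2 = Π 𝒟_τ^{1/2}(𝓘,𝓘) V_2(𝓘,:) and N_{M_2} is the n×n diagonal matrix with N_{M_2}(i,i) = 1/‖M_2(i,:)‖ (all diagonal entries positive). Moreover, Π(i,:) = Π(j,:) implies V_{*,2}(i,:) = V_{*,2}(j,:). -/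

import Mathlib

open Matrix BigOperators


open Matrix BigOperators

noncomputable def rowNorm {m k : ℕ} (M : Matrix (Fin m) (Fin k) ℝ) (i : Fin m) : ℝ :=
  Real.sqrt (∑ j, (M i j) ^ 2)

lemma rowNorm_nonneg {m k : ℕ} (M : Matrix (Fin m) (Fin k) ℝ) (i : Fin m) :
    0 ≤ rowNorm M i := Real.sqrt_nonneg _

lemma rowNorm_pos {m k : ℕ} (M : Matrix (Fin m) (Fin k) ℝ) (i : Fin m)
    (h : M i ≠ 0) : 0 < rowNorm M i := by
  apply Real.sqrt_pos.mpr
  obtain ⟨j, hj⟩ : ∃ j, M i j ≠ 0 := by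
    by_contra h'; push_neg at h'; exact h (funext h')
  exact Finset.sum_pos' (fun j _ => sq_nonneg _)
    ⟨j, Finset.mem_univ j, by positivity⟩

lemma rowNorm_smul_row {m k : ℕ} (M N : Matrix (Fin m) (Fin k) ℝ) (i : Fin m)
    (c : ℝ) (hc : 0 ≤ c) (h : ∀ j, N i j = c * M i j) :
    rowNorm N i = c * rowNorm M i := by
  unfold rowNorm
  simp only [h, mul_pow, ← Finset.mul_sum]
  rw [Real.sqrt_mul (sq_nonneg c), Real.sqrt_sq hc]

lemma diag_mul_diag_inv {K : ℕ} (f : Fin K → ℝ) (hf : ∀ k, f k ≠ 0) :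
    Matrix.diagonal f * Matrix.diagonal (fun k => (f k)⁻¹) =
      (1 : Matrix (Fin K) (Fin K) ℝ) := by
  rw [Matrix.diagonal_mul_diagonal]
  ext k l
  by_cases h : k = l <;>
    simp [Matrix.diagonal_apply, Matrix.one_apply, h, mul_inv_cancel₀ (hf l)]

/-- Key matrix identity. -/
lemma key_fact {n K : ℕ} (Pi : Matrix (Fin n) (Fin K) ℝ)
    (P : Matrix (Fin K) (Fin K) ℝ) (d : Fin n → ℝ) (hd : ∀ i, d i ≠ 0)
    (V : Matrix (Fin n) (Fin K) ℝ) (e : Fin K → ℝ) (he : ∀ k, e k ≠ 0)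
    (hVorth : Vᵀ * V = 1)
    (hVE : Matrix.diagonal (fun i => (d i)⁻¹) * (Pi * P * Piᵀ) *
      Matrix.diagonal (fun i => (d i)⁻¹) = V * Matrix.diagonal e * Vᵀ)
    (Idx : Fin K → Fin n) (hIdx : Pi.submatrix Idx id = 1) :
    V * Vᵀ = Matrix.diagonal (fun i => (d i)⁻¹) *
      (Pi * (Matrix.diagonal (fun k => d (Idx k)) * (V * Vᵀ).submatrix Idx id)) := by
  set Dm := Matrix.diagonal (fun i => (d i)⁻¹) with hDm
  set L := Dm * (Pi * P * Piᵀ) * Dm with hLdef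
  have hLV : L * V = V * Matrix.diagonal e := by
    rw [hVE, Matrix.mul_assoc (V * Matrix.diagonal e) Vᵀ V, hVorth, Matrix.mul_one]
  have hEinv : Matrix.diagonal e * Matrix.diagonal (fun k => (e k)⁻¹) =
      (1 : Matrix (Fin K) (Fin K) ℝ) := diag_mul_diag_inv e he
  have hVrec : V = L * (V * Matrix.diagonal (fun k => (e k)⁻¹)) := by
    rw [← Matrix.mul_assoc, hLV, Matrix.mul_assoc, hEinv, Matrix.mul_one]
  set B := P * (Piᵀ * (Dm * (V * Matrix.diagonal (fun k => (e k)⁻¹)))) with hB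
  have hVfact : V = Dm * (Pi * B) := by
    conv_lhs => rw [hVrec]
    rw [hLdef, hB]
    simp only [Matrix.mul_assoc]
  set C := B * (Bᵀ * (Piᵀ * Dm)) with hC
  have hV2C : V * Vᵀ = Dm * (Pi * C) := by
    conv_lhs => rw [hVfact]
    rw [Matrix.transpose_mul, Matrix.transpose_mul, hDm, Matrix.diagonal_transpose]
    simp only [hC, ← hDm, Matrix.mul_assoc]
  have hIe : ∀ k l, Pi (Idx k) l = if k = l then 1 else 0 := by
    intro k l
    have := congrFun (congrFun hIdx k) l
    simpa [Matrix.submatrix_apply, Matrix.one_apply] using this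
  have hsub : (V * Vᵀ).submatrix Idx id =
      Matrix.diagonal (fun k => (d (Idx k))⁻¹) * C := by
    rw [hV2C]
    ext k j
    simp only [Matrix.submatrix_apply, id_eq, hDm, Matrix.diagonal_mul]
    congr 1
    rw [Matrix.mul_apply, Finset.sum_eq_single k]
    · simp [hIe]
    · intro b _ hb
      simp [hIe, Ne.symm hb]
    · simp
  have hDD : Matrix.diagonal (fun k => d (Idx k)) *
      Matrix.diagonal (fun k => (d (Idx k))⁻¹) = (1 : Matrix (Fin K) (Fin K) ℝ) :=
    diag_mul_diag_inv _ (fun k => hd (Idx k))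
  rw [hsub, ← Matrix.mul_assoc (Matrix.diagonal fun k => d (Idx k)), hDD,
    Matrix.one_mul, ← hV2C]

/-- Lemma 4.4: with `V₂ = V V'` and `V_{*,2}` its row-normalization, there is a
nonnegative `Y₂` with no zero row such that `V_{*,2} = Y₂ V_{*,2}(𝓘,:)`, explicitly
`Y₂ = N_{M₂} Π 𝒟_τ^{1/2}(𝓘,𝓘) N_{V₂}^{-1}(𝓘,𝓘)` with all diagonal entries of `N_{M₂}` positive;
moreover equal membership rows give equal rows of `V_{*,2}`. -/
theorem stmt_5
    {n K : ℕ} (hn : 0 < n) (hK : 0 < K) (hKn : K ≤ n)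
    (Pi : Matrix (Fin n) (Fin K) ℝ)
    (hPi_nonneg : ∀ i k, 0 ≤ Pi i k)
    (hPi_rowsum : ∀ i, ∑ k, Pi i k = 1)
    (hPi_rank : Pi.rank = K)
    (hpure : ∀ k : Fin K, ∃ i : Fin n, ∀ l, Pi i l = if l = k then 1 else 0)
    (Pt : Matrix (Fin K) (Fin K) ℝ)
    (hPt_symm : Pt.IsSymm)
    (hPt_nonneg : ∀ k l, 0 ≤ Pt k l)
    (hPt_rank : Pt.rank = K)
    (hPt_le_one : ∀ k l, Pt k l ≤ 1)
    (hPt_max : ∃ k l, Pt k l = 1)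
    (ρ τ : ℝ) (hρ0 : 0 < ρ) (hρ1 : ρ ≤ 1) (hτ : 0 ≤ τ)
    (Om : Matrix (Fin n) (Fin n) ℝ) (hOm : Om = Pi * (ρ • Pt) * Piᵀ)
    (deg : Fin n → ℝ) (hdeg : ∀ i, deg i = ∑ j, Om i j)
    (hpos : ∀ i, 0 < deg i + τ)
    (Ltau : Matrix (Fin n) (Fin n) ℝ)
    (hLtau : Ltau = Matrix.diagonal (fun i => (Real.sqrt (deg i + τ))⁻¹) * Om *
      Matrix.diagonal (fun i => (Real.sqrt (deg i + τ))⁻¹))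
    (Idx : Fin K → Fin n) (hIdx : Pi.submatrix Idx id = 1)
    (V : Matrix (Fin n) (Fin K) ℝ) (e : Fin K → ℝ)
    (hVorth : Vᵀ * V = 1) (he : ∀ k, e k ≠ 0)
    (hVE : Ltau = V * Matrix.diagonal e * Vᵀ)
    (V2 : Matrix (Fin n) (Fin n) ℝ) (hV2 : V2 = V * Vᵀ)
    (hV2row : ∀ i, V2 i ≠ 0)
    (Vstar2 : Matrix (Fin n) (Fin n) ℝ)
    (hVstar2 : ∀ i j, Vstar2 i j = V2 i j / rowNorm V2 i)
    (M2 : Matrix (Fin n) (Fin n) ℝ)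
    (hM2 : M2 = Pi * Matrix.diagonal (fun k => Real.sqrt (deg (Idx k) + τ)) *
      V2.submatrix Idx id)
    (Y2 : Matrix (Fin n) (Fin K) ℝ)
    (hY2 : Y2 = Matrix.diagonal (fun i => (rowNorm M2 i)⁻¹) * Pi *
      Matrix.diagonal (fun k => Real.sqrt (deg (Idx k) + τ)) *
      Matrix.diagonal (fun k => rowNorm V2 (Idx k))) :
    (∀ i k, 0 ≤ Y2 i k) ∧
    (∀ i, Y2 i ≠ 0) ∧
    Vstar2 = Y2 * Vstar2.submatrix Idx id ∧
    (∀ i, 0 < (rowNorm M2 i)⁻¹) ∧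
    (∀ i j : Fin n, Pi i = Pi j → Vstar2 i = Vstar2 j) := by
  have hd : ∀ i, (0:ℝ) < Real.sqrt (deg i + τ) := fun i => Real.sqrt_pos.mpr (hpos i)
  have hdne : ∀ i, Real.sqrt (deg i + τ) ≠ 0 := fun i => (hd i).ne'
  have hVEeq : Matrix.diagonal (fun i => (Real.sqrt (deg i + τ))⁻¹) *
      (Pi * (ρ • Pt) * Piᵀ) *
      Matrix.diagonal (fun i => (Real.sqrt (deg i + τ))⁻¹) =
      V * Matrix.diagonal e * Vᵀ := by
    rw [← hOm, ← hLtau, hVE]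
  have hkey := key_fact Pi (ρ • Pt) (fun i => Real.sqrt (deg i + τ)) hdne V e he
    hVorth hVEeq Idx hIdx
  have hV2M2 : V2 = Matrix.diagonal (fun i => (Real.sqrt (deg i + τ))⁻¹) * M2 := by
    rw [hM2, hV2, Matrix.mul_assoc Pi]
    exact hkey
  have hV2entry : ∀ i j, V2 i j = (Real.sqrt (deg i + τ))⁻¹ * M2 i j := by
    intro i j
    conv_lhs => rw [hV2M2]
    rw [Matrix.diagonal_mul]
  have hM2row : ∀ i j, M2 i j = Real.sqrt (deg i + τ) * V2 i j := by
    intro i j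
    rw [hV2entry, ← mul_assoc, mul_inv_cancel₀ (hdne i), one_mul]
  have hnV : ∀ i, 0 < rowNorm V2 i := fun i => rowNorm_pos _ _ (hV2row i)
  have hnM : ∀ i, rowNorm M2 i = Real.sqrt (deg i + τ) * rowNorm V2 i :=
    fun i => rowNorm_smul_row V2 M2 i _ (Real.sqrt_nonneg _) (fun j => hM2row i j)
  have hnMpos : ∀ i, 0 < rowNorm M2 i := by
    intro i; rw [hnM i]; exact mul_pos (hd i) (hnV i)
  have hY2e : ∀ i k, Y2 i k = (rowNorm M2 i)⁻¹ * Pi i k *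
      Real.sqrt (deg (Idx k) + τ) * rowNorm V2 (Idx k) := by
    intro i k
    rw [hY2]
    simp only [Matrix.mul_diagonal, Matrix.diagonal_mul]
  have hM2entry : ∀ i j, M2 i j =
      ∑ k, Pi i k * Real.sqrt (deg (Idx k) + τ) * V2 (Idx k) j := by
    intro i j
    rw [hM2, Matrix.mul_apply]
    refine Finset.sum_congr rfl (fun k _ => ?_)
    rw [Matrix.mul_diagonal, Matrix.submatrix_apply]
    rfl
  have keyM : ∀ i l, Vstar2 i l = M2 i l / rowNorm M2 i := by
    intro i l
    rw [hVstar2, hnM, hM2row, mul_div_mul_left _ _ (hdne i)]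
  refine ⟨?_, ?_, ?_, ?_, ?_⟩
  · intro i k
    rw [hY2e]
    exact mul_nonneg (mul_nonneg (mul_nonneg
      (inv_nonneg.mpr (rowNorm_nonneg _ _)) (hPi_nonneg i k))
      (Real.sqrt_nonneg _)) (rowNorm_nonneg _ _)
  · intro i hzero
    obtain ⟨k, hk⟩ : ∃ k, Pi i k ≠ 0 := by
      by_contra h'; push_neg at h'
      have := hPi_rowsum i
      simp [h'] at this
    have hposY : 0 < Y2 i k := by
      rw [hY2e]
      exact mul_pos (mul_pos (mul_pos (inv_pos.mpr (hnMpos i))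
        ((hPi_nonneg i k).lt_of_ne (Ne.symm hk))) (hd _)) (hnV _)
    exact hposY.ne' (congrFun hzero k)
  · ext i j
    rw [Matrix.mul_apply, keyM i j, hM2entry i j, Finset.sum_div]
    refine Finset.sum_congr rfl (fun k _ => ?_)
    rw [Matrix.submatrix_apply, hY2e, hVstar2]
    simp only [id_eq]
    have h1 : rowNorm V2 (Idx k) ≠ 0 := (hnV (Idx k)).ne'
    have h2 : rowNorm M2 i ≠ 0 := (hnMpos i).ne'
    field_simp
  · intro i
    exact inv_pos.mpr (hnMpos i)
  · intro i j hij
    have hMrow : M2 i = M2 j := by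
      funext l
      rw [hM2entry, hM2entry]
      exact Finset.sum_congr rfl fun k _ => by
        rw [show Pi i k = Pi j k from congrFun hij k]
    have hnorm : rowNorm M2 i = rowNorm M2 j := by
      unfold rowNorm; rw [hMrow]
    funext l
    rw [keyM, keyM, hnorm, congrFun hMrow l]
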